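/- Let E be a real inner product space with inner product ⟪·,·⟫. Let b, k ∈ E, set B := ⟪b,b⟫ and f := ⟪b,k⟫, and assume B > 0. Let p, q, h be real numbers with p + q·B ≠ 0 and 4·p + 3·q·B ≠ 0. Suppose that for every y ∈ E one has B·(4·p + 3·q·B)·⟪k,y⟫² − 4·(4·p + 3·q·B)·⟪b,y⟫·⟪k,y⟫·f + 4·p·⟪y,y⟫·f² = h·(p·B·⟪y,y⟫ − (4·p + 3·q·B)·⟪b,y⟫²). If f = 0, then k = 0. -/
import Mathlib


open RealInnerProductSpace

/-- Case I of the proof of the main theorem: if `f = 0` then `k = 0`. -/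
theorem conformal_factor_case_I {E : Type*} [NormedAddCommGroup E] [InnerProductSpace ℝ E]
    (b k : E) (B f : ℝ) (hBdef : B = ⟪b, b⟫) (hfdef : f = ⟪b, k⟫) (hB : 0 < B)
    (p q h : ℝ) (hpq : p + q * B ≠ 0) (hpq' : 4 * p + 3 * q * B ≠ 0)
    (hyp : ∀ y : E,
      B * (4 * p + 3 * q * B) * ⟪k, y⟫ ^ 2
        - 4 * (4 * p + 3 * q * B) * ⟪b, y⟫ * ⟪k, y⟫ * f
        + 4 * p * ⟪y, y⟫ * f ^ 2
      = h * (p * B * ⟪y, y⟫ - (4 * p + 3 * q * B) * ⟪b, y⟫ ^ 2))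
    (hf : f = 0) :
    k = 0 := by
  have hb := hyp b
  rw [hf, ← hBdef] at hb
  -- hb : B * (4p+3qB) * ⟪k,b⟫² - ... = h * (p*B*B - (4p+3qB)*B²)
  have hkb : ⟪k, b⟫ = 0 := by
    rw [real_inner_comm]; linarith [hfdef]
  rw [hkb] at hb
  have hh : h = 0 := by
    have hB2 : B ^ 2 ≠ 0 := pow_ne_zero _ (ne_of_gt hB)
    have : h * (-3 * (p + q * B) * B ^ 2) = 0 := by linarith [hb]
    rcases mul_eq_zero.mp this with h0 | h0
    · exact h0
    · exact absurd h0 (by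
        intro h0
        rcases mul_eq_zero.mp h0 with h1 | h1
        · rcases mul_eq_zero.mp h1 with h2 | h2
          · norm_num at h2
          · exact hpq h2
        · exact hB2 h1)
  have hk := hyp k
  rw [hf, hh] at hk
  have : B * (4 * p + 3 * q * B) * ⟪k, k⟫ ^ 2 = 0 := by linarith [hk]
  have hkk : ⟪k, k⟫ = (0 : ℝ) := by
    rcases mul_eq_zero.mp this with h0 | h0
    · rcases mul_eq_zero.mp h0 with h1 | h1
      · exact absurd h1 (ne_of_gt hB)
      · exact absurd h1 hpq'
    · exact pow_eq_zero_iff (by norm_num) |>.mp h0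
  exact inner_self_eq_zero.mp hkk
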